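/- For natural numbers n ≥ m and l, the number of pairs consisting of a shuffle of [n] with [l] and a shuffle of [m] with [l], namely C(l+n,n)·C(l+m,m), equals Σ_{r=0}^{m} (-1)^{m+r}·C(n+r, m)·C(m, r)·C(l+n+r, n+r). -/

import Mathlib

open Finset

/-- Difference step for alternating binomial sums. -/
lemma diff_step (k : ℕ) (f : ℕ → ℤ) :
    ∑ s ∈ range (k + 2), (-1 : ℤ) ^ s * ((k + 1).choose s : ℤ) * f s
      = (∑ s ∈ range (k + 1), (-1 : ℤ) ^ s * (k.choose s : ℤ) * f s)
        - ∑ s ∈ range (k + 1), (-1 : ℤ) ^ s * (k.choose s : ℤ) * f (s + 1) := by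
  have e1 : ∑ s ∈ range (k + 2), (-1 : ℤ) ^ s * ((k + 1).choose s : ℤ) * f s
      = (∑ i ∈ range (k + 1), (-1 : ℤ) ^ (i + 1) * ((k + 1).choose (i + 1) : ℤ) * f (i + 1))
        + f 0 := by
    rw [Finset.sum_range_succ' (fun s => (-1 : ℤ) ^ s * ((k + 1).choose s : ℤ) * f s) (k + 1)]
    simp
  have e2 : ∑ s ∈ range (k + 1), (-1 : ℤ) ^ s * (k.choose s : ℤ) * f s
      = (∑ i ∈ range (k + 1), (-1 : ℤ) ^ (i + 1) * (k.choose (i + 1) : ℤ) * f (i + 1))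
        + f 0 := by
    rw [Finset.sum_range_succ' (fun s => (-1 : ℤ) ^ s * (k.choose s : ℤ) * f s) k,
      Finset.sum_range_succ]
    simp [Nat.choose_succ_self]
  have h2 : ∀ i ∈ range (k + 1),
      (-1 : ℤ) ^ (i + 1) * ((k + 1).choose (i + 1) : ℤ) * f (i + 1)
        = (-1 : ℤ) ^ (i + 1) * (k.choose (i + 1) : ℤ) * f (i + 1)
          - (-1 : ℤ) ^ i * (k.choose i : ℤ) * f (i + 1) := by
    intro i _
    have : ((k + 1).choose (i + 1) : ℤ) = (k.choose i : ℤ) + (k.choose (i + 1) : ℤ) := by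
      rw [Nat.choose_succ_succ]; push_cast; ring
    rw [this]; ring
  rw [e1, e2, Finset.sum_congr rfl h2, Finset.sum_sub_distrib]
  ring

/-- Iterated finite difference of `x ↦ C(x, m)`. -/
lemma alt_diff (m : ℕ) : ∀ k, k ≤ m → ∀ x : ℕ,
    ∑ s ∈ range (k + 1), (-1 : ℤ) ^ s * (k.choose s : ℤ) * ((x + s).choose m : ℤ)
      = (-1 : ℤ) ^ k * ((x.choose (m - k) : ℕ) : ℤ) := by
  intro k
  induction k with
  | zero => intro _ x; simp
  | succ k ih =>
    intro hk x
    have hk' : k ≤ m := Nat.le_of_succ_le hk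
    have step := diff_step k (fun s => ((x + s).choose m : ℤ))
    rw [show k + 1 + 1 = k + 2 from rfl, step, ih hk' x]
    have h2 : ∑ s ∈ range (k + 1), (-1 : ℤ) ^ s * (k.choose s : ℤ)
        * ((x + (s + 1)).choose m : ℤ)
        = (-1 : ℤ) ^ k * (((x + 1).choose (m - k) : ℕ) : ℤ) := by
      rw [← ih hk' (x + 1)]
      apply Finset.sum_congr rfl
      intro s _
      rw [show x + (s + 1) = x + 1 + s from by omega]
    rw [h2]
    obtain ⟨j, hj⟩ : ∃ j, m - k = j + 1 := ⟨m - (k + 1), by omega⟩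
    have hj' : m - (k + 1) = j := by omega
    rw [hj, hj', Nat.choose_succ_succ]
    push_cast
    ring

/-- Vandermonde in a convenient form. -/
lemma vand (L n r : ℕ) :
    (((L + r).choose (n + r) : ℕ) : ℤ)
      = ∑ j ∈ range (r + 1), ((r.choose j : ℕ) : ℤ) * ((L.choose (n + j) : ℕ) : ℤ) := by
  have h := Nat.add_choose_eq L r (n + r)
  rw [Finset.Nat.sum_antidiagonal_eq_sum_range_succ
    (fun i j => L.choose i * r.choose j)] at h
  have h2 : ∑ k ∈ range (n + r + 1), L.choose k * r.choose (n + r - k)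
      = ∑ j ∈ range (r + 1), L.choose (n + j) * r.choose (n + r - (n + j)) := by
    rw [show n + r + 1 = n + (r + 1) from by omega, Finset.sum_range_add]
    have : ∑ k ∈ range n, L.choose k * r.choose (n + r - k) = 0 := by
      apply Finset.sum_eq_zero
      intro k hk
      simp only [mem_range] at hk
      rw [Nat.choose_eq_zero_of_lt (show r < n + r - k from by omega)]
      ring
    rw [this, zero_add]
  rw [h2] at h
  rw [h]
  push_cast
  apply Finset.sum_congr rfl
  intro j hj
  simp only [mem_range] at hj
  rw [show n + r - (n + j) = r - j from by omega, Nat.choose_symm (show j ≤ r from by omega)]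
  ring

/-- The number of pairs of a shuffle of `[n]` with `[l]` and a shuffle of `[m]`
with `[l]`, namely `C(l+n,n)·C(l+m,m)`, equals
`Σ_{r=0}^m (-1)^{m+r} C(n+r,m) C(m,r) C(l+n+r, n+r)` for `n ≥ m`. -/
theorem shuffle_disjoint_union_count (n m l : ℕ) (h : m ≤ n) :
    ((l + n).choose n : ℤ) * ((l + m).choose m : ℤ) =
      ∑ r ∈ Finset.range (m + 1),
        (-1 : ℤ) ^ (m + r) * ((n + r).choose m : ℤ) * (m.choose r : ℤ) *
          ((l + n + r).choose (n + r) : ℤ) := by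
  have step1 : ∀ r ∈ range (m + 1),
      (-1 : ℤ) ^ (m + r) * ((n + r).choose m : ℤ) * (m.choose r : ℤ) *
          ((l + n + r).choose (n + r) : ℤ)
        = ∑ j ∈ range (m + 1),
            (-1 : ℤ) ^ (m + r) * ((n + r).choose m : ℤ) * (m.choose r : ℤ) *
              ((r.choose j : ℤ) * (((l + n).choose (n + j) : ℕ) : ℤ)) := by
    intro r hr
    simp only [mem_range] at hr
    rw [vand (l + n) n r, Finset.mul_sum]
    apply Finset.sum_subset
    · exact Finset.range_subset_range.mpr (by omega)
    · intro j _ hj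
      simp only [mem_range, not_lt] at hj
      rw [Nat.choose_eq_zero_of_lt (show r < j from by omega)]
      push_cast
      ring
  rw [Finset.sum_congr rfl step1, Finset.sum_comm]
  have inner : ∀ j ∈ range (m + 1),
      (∑ r ∈ range (m + 1),
          (-1 : ℤ) ^ (m + r) * ((n + r).choose m : ℤ) * (m.choose r : ℤ) *
            ((r.choose j : ℤ) * (((l + n).choose (n + j) : ℕ) : ℤ)))
        = (m.choose j : ℤ) * ((n + j).choose j : ℤ) * (((l + n).choose (n + j) : ℕ) : ℤ) := by
    intro j hj
    simp only [mem_range] at hj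
    have hjm : j ≤ m := by omega
    rw [show m + 1 = j + (m - j + 1) from by omega, Finset.sum_range_add]
    have low : ∑ r ∈ range j,
        (-1 : ℤ) ^ (m + r) * ((n + r).choose m : ℤ) * (m.choose r : ℤ) *
          ((r.choose j : ℤ) * (((l + n).choose (n + j) : ℕ) : ℤ)) = 0 := by
      apply Finset.sum_eq_zero
      intro r hr
      simp only [mem_range] at hr
      rw [Nat.choose_eq_zero_of_lt (show r < j from by omega)]
      push_cast
      ring
    rw [low, zero_add]
    have key : ∀ s ∈ range (m - j + 1),
        (-1 : ℤ) ^ (m + (j + s)) * ((n + (j + s)).choose m : ℤ) * (m.choose (j + s) : ℤ) *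
          (((j + s).choose j : ℤ) * (((l + n).choose (n + j) : ℕ) : ℤ))
        = ((m.choose j : ℤ) * (((l + n).choose (n + j) : ℕ) : ℤ) * (-1 : ℤ) ^ (m + j)) *
            ((-1 : ℤ) ^ s * (((m - j).choose s : ℕ) : ℤ) * (((n + j) + s).choose m : ℤ)) := by
      intro s hs
      simp only [mem_range] at hs
      have hmul : m.choose (j + s) * (j + s).choose j = m.choose j * (m - j).choose s := by
        have hc := Nat.choose_mul (n := m) (show j ≤ j + s from by omega)
        rwa [show j + s - j = s from by omega] at hc
      have hmul' : (m.choose (j + s) : ℤ) * ((j + s).choose j : ℤ)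
          = (m.choose j : ℤ) * (((m - j).choose s : ℕ) : ℤ) := by exact_mod_cast hmul
      have hpow : (-1 : ℤ) ^ (m + (j + s)) = (-1 : ℤ) ^ (m + j) * (-1 : ℤ) ^ s := by
        rw [show m + (j + s) = (m + j) + s from by omega, pow_add]
      calc (-1 : ℤ) ^ (m + (j + s)) * ((n + (j + s)).choose m : ℤ) * (m.choose (j + s) : ℤ) *
          (((j + s).choose j : ℤ) * (((l + n).choose (n + j) : ℕ) : ℤ))
          = ((-1 : ℤ) ^ (m + (j + s)) * (((n + j) + s).choose m : ℤ) *
              (((l + n).choose (n + j) : ℕ) : ℤ)) *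
              ((m.choose (j + s) : ℤ) * ((j + s).choose j : ℤ)) := by
            rw [show n + (j + s) = (n + j) + s from by omega]; ring
        _ = _ := by rw [hmul', hpow]; ring
    rw [Finset.sum_congr rfl key, ← Finset.mul_sum,
      alt_diff m (m - j) (by omega) (n + j), show m - (m - j) = j from by omega]
    have hone : (-1 : ℤ) ^ (m + j) * (-1 : ℤ) ^ (m - j) = 1 := by
      rw [← pow_add, show m + j + (m - j) = 2 * m from by omega, pow_mul]
      norm_num
    calc (m.choose j : ℤ) * (((l + n).choose (n + j) : ℕ) : ℤ) * (-1 : ℤ) ^ (m + j) *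
        ((-1 : ℤ) ^ (m - j) * (((n + j).choose j : ℕ) : ℤ))
        = ((-1 : ℤ) ^ (m + j) * (-1 : ℤ) ^ (m - j)) *
            ((m.choose j : ℤ) * ((n + j).choose j : ℤ) * (((l + n).choose (n + j) : ℕ) : ℤ)) := by
          ring
      _ = _ := by rw [hone]; ring
  rw [Finset.sum_congr rfl inner]
  have chain : ∀ j ∈ range (m + 1),
      (m.choose j : ℤ) * ((n + j).choose j : ℤ) * (((l + n).choose (n + j) : ℕ) : ℤ)
        = ((l + n).choose n : ℤ) * ((m.choose j : ℤ) * (l.choose j : ℤ)) := by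
    intro j hj
    simp only [mem_range] at hj
    by_cases hle : n + j ≤ l + n
    · have hc := Nat.choose_mul (n := l + n) (k := n + j) (s := n) (by omega)
      rw [show l + n - n = l from by omega, show n + j - n = j from by omega] at hc
      have hsymm : (n + j).choose j = (n + j).choose n := by
        rw [← Nat.choose_symm (show j ≤ n + j from by omega),
          show n + j - j = n from by omega]
      have hc' : ((l + n).choose (n + j) : ℤ) * ((n + j).choose n : ℤ)
          = ((l + n).choose n : ℤ) * (l.choose j : ℤ) := by exact_mod_cast hc
      rw [hsymm]
      calc (m.choose j : ℤ) * ((n + j).choose n : ℤ) * (((l + n).choose (n + j) : ℕ) : ℤ)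
          = (m.choose j : ℤ) * (((l + n).choose (n + j) : ℤ) * ((n + j).choose n : ℤ)) := by ring
        _ = _ := by rw [hc']; ring
    · push_neg at hle
      rw [Nat.choose_eq_zero_of_lt (show l + n < n + j from hle),
        Nat.choose_eq_zero_of_lt (show l < j from by omega)]
      push_cast
      ring
  rw [Finset.sum_congr rfl chain, ← Finset.mul_sum]
  congr 1
  have hv := vand l 0 m
  simp only [zero_add] at hv
  rw [hv]
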